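/- If K ⊆ ℝ² is compact, then the one-dimensional Hausdorff content of K equals the one-dimensional Hausdorff content of its topological boundary ∂K. -/

import Mathlib

open Metric ENNReal

/-- The one-dimensional Hausdorff content of a set `K ⊆ ℝ²`: the infimum over
finite collections of closed disks covering `K` of the sum of their diameters. -/
noncomputable def H1content (K : Set (EuclideanSpace ℝ (Fin 2))) : ℝ≥0∞ :=
  ⨅ (s : Finset (EuclideanSpace ℝ (Fin 2) × ℝ))
    (_ : K ⊆ ⋃ p ∈ s, closedBall p.1 p.2),
      ∑ p ∈ s, ENNReal.ofReal (2 * p.2)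

section Aux

open Set

/-- A preconnected set meeting both a set and its complement meets its frontier. -/
theorem aux_inter_frontier {α : Type*} [TopologicalSpace α] {s t : Set α} (hs : IsPreconnected s)
    (h1 : (s ∩ t).Nonempty) (h2 : (s \ t).Nonempty) : (s ∩ frontier t).Nonempty := by
  by_contra h
  rw [Set.not_nonempty_iff_eq_empty] at h
  have key : ∀ x ∈ s, (x ∈ t → x ∈ interior t) ∧ (x ∉ t → x ∈ interior tᶜ) := by
    intro x hx
    have hxf : x ∉ frontier t := fun hf => Set.eq_empty_iff_forall_notMem.1 h x ⟨hx, hf⟩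
    constructor
    · intro hxt
      have h3 : x ∈ closure t := subset_closure hxt
      rw [closure_eq_interior_union_frontier] at h3
      exact h3.resolve_right hxf
    · intro hxt
      have h3 : x ∈ closure tᶜ := subset_closure hxt
      rw [closure_eq_interior_union_frontier, frontier_compl] at h3
      exact h3.resolve_right hxf
  have hsub : s ⊆ interior t ∪ interior tᶜ := by
    intro x hx
    rcases Classical.em (x ∈ t) with hxt | hxt
    · exact Or.inl ((key x hx).1 hxt)
    · exact Or.inr ((key x hx).2 hxt)
  obtain ⟨x1, hx1⟩ := h1
  obtain ⟨x2, hx2⟩ := h2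
  obtain ⟨y, hy, hyt, hyt'⟩ := hs (interior t) (interior tᶜ) isOpen_interior isOpen_interior hsub
    ⟨x1, hx1.1, (key x1 hx1.1).1 hx1.2⟩ ⟨x2, hx2.1, (key x2 hx2.1).2 hx2.2⟩
  exact (interior_subset hyt') (interior_subset hyt)

variable {F : Type*} [NormedAddCommGroup F] [NormedSpace ℝ F]

/-- Two intersecting closed balls are contained in a single closed ball whose
diameter is at most the sum of the two diameters. -/
theorem aux_merge (c₁ c₂ : F) (r₁ r₂ : ℝ)
    (hint : (closedBall c₁ r₁ ∩ closedBall c₂ r₂).Nonempty) :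
    ∃ c ρ, 0 ≤ ρ ∧ ρ ≤ r₁ + r₂ ∧
      closedBall c₁ r₁ ∪ closedBall c₂ r₂ ⊆ closedBall c ρ := by
  obtain ⟨y, hy₁, hy₂⟩ := hint
  rw [mem_closedBall] at hy₁ hy₂
  have hr₁ : 0 ≤ r₁ := le_trans dist_nonneg hy₁
  have hr₂ : 0 ≤ r₂ := le_trans dist_nonneg hy₂
  set d := dist c₁ c₂ with hd
  have hd0 : 0 ≤ d := dist_nonneg
  have hdle : d ≤ r₁ + r₂ := by
    calc d ≤ dist c₁ y + dist y c₂ := dist_triangle _ _ _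
    _ ≤ r₁ + r₂ := by rw [dist_comm c₁ y]; exact add_le_add hy₁ hy₂
  by_cases h1 : d + r₂ ≤ r₁
  · refine ⟨c₁, r₁, hr₁, by linarith, ?_⟩
    rintro w (hw | hw)
    · exact hw
    · rw [mem_closedBall] at hw ⊢
      calc dist w c₁ ≤ dist w c₂ + dist c₂ c₁ := dist_triangle _ _ _
      _ ≤ r₂ + d := by rw [dist_comm c₂ c₁]; exact add_le_add hw le_rfl
      _ ≤ r₁ := by linarith
  · by_cases h2 : d + r₁ ≤ r₂
    · refine ⟨c₂, r₂, hr₂, by linarith, ?_⟩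
      rintro w (hw | hw)
      · rw [mem_closedBall] at hw ⊢
        calc dist w c₂ ≤ dist w c₁ + d := dist_triangle _ _ _
        _ ≤ r₁ + d := by exact add_le_add hw le_rfl
        _ ≤ r₂ := by linarith
      · exact hw
    · push_neg at h1 h2
      have hdpos : 0 < d := by
        rcases lt_or_eq_of_le hd0 with h | h
        · exact h
        · exfalso; rw [← h] at h1 h2; linarith
      set lam := (d + r₂ - r₁) / (2 * d) with hlam
      have hlam0 : 0 ≤ lam := by
        apply div_nonneg (by linarith) (by linarith)
      have hlam1 : lam ≤ 1 := by
        rw [div_le_one (by linarith)]; linarith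
      refine ⟨c₁ + lam • (c₂ - c₁), (d + r₁ + r₂) / 2, by positivity, by linarith, ?_⟩
      have hc1 : dist (c₁ + lam • (c₂ - c₁)) c₁ = (d + r₂ - r₁) / 2 := by
        rw [dist_eq_norm]
        have : c₁ + lam • (c₂ - c₁) - c₁ = lam • (c₂ - c₁) := by abel
        rw [this, norm_smul, Real.norm_eq_abs, abs_of_nonneg hlam0, hlam]
        rw [show ‖c₂ - c₁‖ = d by rw [hd, dist_eq_norm, norm_sub_rev]]
        field_simp
      have hc2 : dist (c₁ + lam • (c₂ - c₁)) c₂ = (d + r₁ - r₂) / 2 := by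
        rw [dist_eq_norm]
        have : c₁ + lam • (c₂ - c₁) - c₂ = (lam - 1) • (c₂ - c₁) := by
          rw [sub_smul, one_smul]; abel
        rw [this, norm_smul, Real.norm_eq_abs, abs_of_nonpos (by linarith), hlam]
        rw [show ‖c₂ - c₁‖ = d by rw [hd, dist_eq_norm, norm_sub_rev]]
        field_simp
        ring
      rintro w (hw | hw) <;> rw [mem_closedBall] at hw ⊢
      · calc dist w (c₁ + lam • (c₂ - c₁)) ≤ dist w c₁ + dist c₁ (c₁ + lam • (c₂ - c₁)) :=
            dist_triangle _ _ _
        _ ≤ r₁ + (d + r₂ - r₁) / 2 := by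
            rw [dist_comm c₁, hc1]; exact add_le_add hw le_rfl
        _ = (d + r₁ + r₂) / 2 := by ring
      · calc dist w (c₁ + lam • (c₂ - c₁)) ≤ dist w c₂ + dist c₂ (c₁ + lam • (c₂ - c₁)) :=
            dist_triangle _ _ _
        _ ≤ r₂ + (d + r₁ - r₂) / 2 := by
            rw [dist_comm c₂, hc2]; exact add_le_add hw le_rfl
        _ = (d + r₁ + r₂) / 2 := by ring

end Aux

section Crux

open Set

local notation "E2" => EuclideanSpace ℝ (Fin 2)

noncomputable def e1 : EuclideanSpace ℝ (Fin 2) := EuclideanSpace.single 0 1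

lemma e1_norm : ‖e1‖ = 1 := by
  rw [e1, EuclideanSpace.norm_single, norm_one]

noncomputable def phi (y : EuclideanSpace ℝ (Fin 2)) : ℝ := inner ℝ e1 y

lemma phi_add_smul (y : EuclideanSpace ℝ (Fin 2)) (t : ℝ) :
    phi (y + t • e1) = phi y + t := by
  rw [phi, phi, inner_add_right, real_inner_smul_right, real_inner_self_eq_norm_sq, e1_norm]
  ring

lemma phi_lipschitz (a b : EuclideanSpace ℝ (Fin 2)) : phi a - phi b ≤ dist a b := by
  have : phi a - phi b = inner ℝ e1 (a - b) := by rw [phi, phi, inner_sub_right]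
  rw [this]
  calc (inner ℝ e1 (a - b) : ℝ) ≤ ‖e1‖ * ‖a - b‖ := real_inner_le_norm _ _
  _ = dist a b := by rw [e1_norm, one_mul, dist_eq_norm]

lemma phi_continuous : Continuous phi := by
  exact Continuous.inner continuous_const continuous_id

/-- If pairwise disjoint closed balls cover the frontier of a compact set `K` in the
plane, then they cover `K`. -/
theorem crux (K : Set (EuclideanSpace ℝ (Fin 2))) (hK : IsCompact K)
    (s : Finset (EuclideanSpace ℝ (Fin 2) × ℝ))
    (hdisj : ∀ p ∈ s, ∀ q ∈ s, p ≠ q → Disjoint (closedBall p.1 p.2) (closedBall q.1 q.2))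
    (hcov : frontier K ⊆ ⋃ p ∈ s, closedBall p.1 p.2) :
    K ⊆ ⋃ p ∈ s, closedBall p.1 p.2 := by
  classical
  set F := ⋃ p ∈ s, closedBall p.1 p.2 with hF
  have hFc : IsClosed F := isClosed_biUnion_finset (fun p _ => Metric.isClosed_closedBall)
  by_contra hcon
  rw [Set.not_subset] at hcon
  obtain ⟨x, hxK, hxF⟩ := hcon
  set V := K \ F with hV
  have hVopen : IsOpen V := by
    have hVeq : V = interior K ∩ Fᶜ := by
      ext y
      constructor
      · rintro ⟨hyK, hyF⟩
        refine ⟨?_, hyF⟩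
        have hyfr : y ∉ frontier K := fun h => hyF (hcov h)
        rw [hK.isClosed.frontier_eq] at hyfr
        simp only [Set.mem_diff, not_and, not_not] at hyfr
        exact hyfr hyK
      · rintro ⟨hyi, hyF⟩
        exact ⟨interior_subset hyi, hyF⟩
    rw [hVeq]
    exact isOpen_interior.inter hFc.isOpen_compl
  have hVK : V ⊆ K := Set.diff_subset
  have hcVK : closure V ⊆ K := closure_minimal hVK hK.isClosed
  have hcVcomp : IsCompact (closure V) := hK.of_isClosed_subset isClosed_closure hcVK
  have hVne : (closure V).Nonempty := ⟨x, subset_closure ⟨hxK, hxF⟩⟩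
  obtain ⟨z, hzcV, hzmax⟩ := hcVcomp.exists_isMaxOn hVne phi_continuous.continuousOn
  rw [isMaxOn_iff] at hzmax
  have hzV : z ∉ V := by
    intro hzV
    obtain ⟨ε, hε, hball⟩ := Metric.isOpen_iff.1 hVopen z hzV
    have hz' : z + (ε/2) • e1 ∈ V := by
      apply hball
      rw [mem_ball, dist_eq_norm]
      have : z + (ε/2) • e1 - z = (ε/2) • e1 := by abel
      rw [this, norm_smul, Real.norm_eq_abs, abs_of_pos (by linarith), e1_norm]
      linarith
    have hle := hzmax _ (subset_closure hz')
    rw [phi_add_smul] at hle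
    linarith
  have hzK : z ∈ K := hcVK hzcV
  have hzF : z ∈ F := by
    by_contra hzF
    exact hzV ⟨hzK, hzF⟩
  rw [hF, Set.mem_iUnion₂] at hzF
  obtain ⟨q, hqs, hzq⟩ := hzF
  rw [mem_closedBall] at hzq
  have hr : 0 ≤ q.2 := le_trans dist_nonneg hzq
  set A := ⋃ p ∈ s.erase q, closedBall p.1 p.2 with hA
  have hAc : IsClosed A := isClosed_biUnion_finset (fun p _ => Metric.isClosed_closedBall)
  have hdisjA : Disjoint (closedBall q.1 q.2) A := by
    rw [hA, Set.disjoint_iUnion₂_right]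
    intro p hp
    rw [Finset.mem_erase] at hp
    exact hdisj q hqs p hp.2 (Ne.symm hp.1)
  obtain ⟨δ, hδ, hthick⟩ := hdisjA.exists_thickenings (isCompact_closedBall _ _) hAc
  set ρ := q.2 + δ/2 with hρ
  have hqρ : q.2 < ρ := by rw [hρ]; linarith
  have hρ0 : 0 < ρ := lt_of_le_of_lt hr hqρ
  -- anything in the annulus q.2 < dist ≤ ρ around q.1 is not in F
  have notinF : ∀ y : EuclideanSpace ℝ (Fin 2), q.2 < dist y q.1 → dist y q.1 ≤ ρ → y ∉ F := by
    intro y h1 h2 hyF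
    have hdy : 0 < dist y q.1 := lt_of_le_of_lt hr h1
    have hyth : y ∈ Metric.thickening δ (closedBall q.1 q.2) := by
      rw [Metric.mem_thickening_iff]
      refine ⟨q.1 + (q.2 / dist y q.1) • (y - q.1), ?_, ?_⟩
      · rw [mem_closedBall, dist_eq_norm]
        have : q.1 + (q.2 / dist y q.1) • (y - q.1) - q.1 = (q.2 / dist y q.1) • (y - q.1) := by
          abel
        rw [this, norm_smul, Real.norm_eq_abs, abs_of_nonneg (div_nonneg hr hdy.le)]
        rw [show ‖y - q.1‖ = dist y q.1 from (dist_eq_norm _ _).symm]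
        rw [div_mul_cancel₀ _ (ne_of_gt hdy)]
      · rw [dist_eq_norm]
        have : y - (q.1 + (q.2 / dist y q.1) • (y - q.1)) =
            (1 - q.2 / dist y q.1) • (y - q.1) := by
          rw [sub_smul, one_smul]; abel
        rw [this, norm_smul, Real.norm_eq_abs]
        rw [show ‖y - q.1‖ = dist y q.1 from (dist_eq_norm _ _).symm]
        rw [abs_of_nonneg (by rw [sub_nonneg, div_le_one hdy]; exact h1.le)]
        have : (1 - q.2 / dist y q.1) * dist y q.1 = dist y q.1 - q.2 := by
          field_simp
        rw [this]
        have : dist y q.1 - q.2 ≤ δ/2 := by rw [hρ] at h2; linarith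
        linarith
    have hyA : y ∉ A := by
      intro hyA
      exact Set.disjoint_left.1 hthick hyth (self_subset_thickening hδ A hyA)
    rw [hF, Set.mem_iUnion₂] at hyF
    obtain ⟨p, hps, hyp⟩ := hyF
    rcases eq_or_ne p q with rfl | hpq
    · rw [mem_closedBall] at hyp; linarith
    · exact hyA (Set.mem_biUnion (Finset.mem_erase.2 ⟨hpq, hps⟩) hyp)
  -- pick a point of V close to z
  obtain ⟨v, hvV, hvz⟩ : ∃ v ∈ V, dist z v < δ/2 :=
    Metric.mem_closure_iff.1 hzcV (δ/2) (by linarith)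
  set d := dist v q.1 with hd
  have hd1 : q.2 < d := by
    by_contra hle
    push_neg at hle
    exact hvV.2 (Set.mem_biUnion hqs (mem_closedBall.2 hle))
  have hd0 : 0 < d := lt_of_le_of_lt hr hd1
  have hd2 : d < ρ := by
    calc d ≤ dist v z + dist z q.1 := dist_triangle _ _ _
    _ < δ/2 + q.2 := by
        rw [dist_comm v z]
        exact add_lt_add_of_lt_of_le hvz hzq
    _ = ρ := by rw [hρ]; linarith
  set w := q.1 + (ρ/d) • (v - q.1) with hw
  have hwsph : w ∈ sphere q.1 ρ := by
    rw [mem_sphere, dist_eq_norm, hw]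
    have : q.1 + (ρ/d) • (v - q.1) - q.1 = (ρ/d) • (v - q.1) := by abel
    rw [this, norm_smul, Real.norm_eq_abs, abs_of_nonneg (div_nonneg hρ0.le hd0.le)]
    rw [show ‖v - q.1‖ = d from (dist_eq_norm _ _).symm]
    rw [div_mul_cancel₀ _ (ne_of_gt hd0)]
  have hrank : (1 : Cardinal) < Module.rank ℝ (EuclideanSpace ℝ (Fin 2)) := by
    rw [← Module.finrank_eq_rank]
    norm_cast
    simp [finrank_euclideanSpace]
  have hsconn : IsConnected (sphere q.1 ρ) := isConnected_sphere hrank q.1 hρ0.le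
  have hsegconn : IsConnected (segment ℝ v w) :=
    ⟨⟨v, left_mem_segment ℝ v w⟩, (convex_segment v w).isPreconnected⟩
  set C := segment ℝ v w ∪ sphere q.1 ρ with hC
  have hCconn : IsConnected C :=
    hsegconn.union ⟨w, right_mem_segment ℝ v w, hwsph⟩ hsconn
  have hCF : C ⊆ Fᶜ := by
    rintro y (hy | hy)
    · obtain ⟨a, b, ha, hb, hab, hy⟩ := hy
      set t := a + b * (ρ/d) with ht
      have hyq : y - q.1 = t • (v - q.1) := by
        rw [← hy, hw, ht, show a = 1 - b from by linarith]
        module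
      have hdist : dist y q.1 = t * d := by
        rw [dist_eq_norm, hyq, norm_smul, Real.norm_eq_abs]
        rw [show ‖v - q.1‖ = d from (dist_eq_norm _ _).symm]
        rw [abs_of_nonneg (by positivity)]
      have hρd1 : 1 ≤ ρ/d := by rw [le_div_iff₀ hd0]; linarith
      have ht1 : 1 ≤ t := by
        rw [ht]
        calc (1:ℝ) = a + b := hab.symm
        _ ≤ a + b * (ρ/d) := by nlinarith
      have ht2 : t ≤ ρ/d := by
        rw [ht]
        calc a + b * (ρ/d) ≤ a * (ρ/d) + b * (ρ/d) := by nlinarith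
        _ = (a + b) * (ρ/d) := by ring
        _ = ρ/d := by rw [hab, one_mul]
      apply notinF y
      · rw [hdist]; nlinarith
      · rw [hdist]
        calc t * d ≤ (ρ/d) * d := by nlinarith
        _ = ρ := by field_simp
    · rw [mem_sphere] at hy
      exact notinF y (by rw [hy]; exact hqρ) (le_of_eq hy)
  set ystar := q.1 + ρ • e1 with hystar
  have hystarsph : ystar ∈ sphere q.1 ρ := by
    rw [mem_sphere, dist_eq_norm, hystar]
    have : q.1 + ρ • e1 - q.1 = ρ • e1 := by abel
    rw [this, norm_smul, Real.norm_eq_abs, abs_of_pos hρ0, e1_norm, mul_one]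
  have hystarK : ystar ∉ K := by
    intro hyK
    have hyV : ystar ∈ V := ⟨hyK, hCF (Or.inr hystarsph)⟩
    have hle := hzmax _ (subset_closure hyV)
    have h1 : phi ystar = phi q.1 + ρ := by rw [hystar, phi_add_smul]
    have h2 : phi z - phi q.1 ≤ q.2 := le_trans (phi_lipschitz z q.1) hzq
    rw [h1] at hle
    linarith
  obtain ⟨y, hyC, hyfr⟩ := aux_inter_frontier hCconn.isPreconnected
    ⟨v, Or.inl (left_mem_segment ℝ v w), hvV.1⟩ ⟨ystar, Or.inr hystarsph, hystarK⟩
  exact hCF hyC (hcov hyfr)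

end Crux

section Main

lemma H1content_le_of_cover (K : Set (EuclideanSpace ℝ (Fin 2)))
    (s : Finset (EuclideanSpace ℝ (Fin 2) × ℝ))
    (h : K ⊆ ⋃ p ∈ s, closedBall p.1 p.2) :
    H1content K ≤ ∑ p ∈ s, ENNReal.ofReal (2 * p.2) := by
  rw [H1content]
  exact iInf_le_of_le s (iInf_le _ h)

lemma key_lemma (K : Set (EuclideanSpace ℝ (Fin 2))) (hK : IsCompact K) :
    ∀ n (s : Finset (EuclideanSpace ℝ (Fin 2) × ℝ)), s.card ≤ n →
      frontier K ⊆ ⋃ p ∈ s, closedBall p.1 p.2 →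
      H1content K ≤ ∑ p ∈ s, ENNReal.ofReal (2 * p.2) := by
  classical
  intro n
  induction n with
  | zero =>
    intro s hcard hcov
    have hs : s = ∅ := Finset.card_eq_zero.1 (Nat.le_zero.1 hcard)
    subst hs
    exact H1content_le_of_cover K ∅ (crux K hK ∅ (by simp) hcov)
  | succ n ih =>
    intro s hcard hcov
    by_cases hex : ∃ p ∈ s, ∃ q ∈ s, p ≠ q ∧
        (closedBall p.1 p.2 ∩ closedBall q.1 q.2).Nonempty
    · obtain ⟨p, hp, q, hq, hpq, hint⟩ := hex
      obtain ⟨y, hy1, hy2⟩ := hint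
      have hr1 : 0 ≤ p.2 := le_trans dist_nonneg (mem_closedBall.1 hy1)
      have hr2 : 0 ≤ q.2 := le_trans dist_nonneg (mem_closedBall.1 hy2)
      obtain ⟨c, ρ, hρ0, hρle, hsub⟩ := aux_merge p.1 q.1 p.2 q.2 ⟨y, hy1, hy2⟩
      set t := (s.erase p).erase q with htdef
      set s' := insert (c, ρ) t with hs'def
      have hqt : q ∈ s.erase p := Finset.mem_erase.2 ⟨Ne.symm hpq, hq⟩
      have hcard' : s'.card ≤ n := by
        calc s'.card ≤ t.card + 1 := Finset.card_insert_le _ _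
        _ = ((s.erase p).card - 1) + 1 := by rw [htdef, Finset.card_erase_of_mem hqt]
        _ = ((s.card - 1) - 1) + 1 := by rw [Finset.card_erase_of_mem hp]
        _ ≤ n := by
            have h2 : 2 ≤ s.card := by
              have := Finset.one_lt_card.2 ⟨p, hp, q, hq, hpq⟩
              omega
            omega
      have hcov' : frontier K ⊆ ⋃ r ∈ s', closedBall r.1 r.2 := by
        intro z hz
        obtain ⟨r, hrs, hzr⟩ := Set.mem_iUnion₂.1 (hcov hz)
        rcases eq_or_ne r p with rfl | hrp
        · exact Set.mem_biUnion (Finset.mem_insert_self _ _) (hsub (Or.inl hzr))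
        · rcases eq_or_ne r q with rfl | hrq
          · exact Set.mem_biUnion (Finset.mem_insert_self _ _) (hsub (Or.inr hzr))
          · exact Set.mem_biUnion
              (Finset.mem_insert_of_mem (Finset.mem_erase.2 ⟨hrq, Finset.mem_erase.2 ⟨hrp, hrs⟩⟩))
              hzr
      have hsum : ∑ r ∈ s', ENNReal.ofReal (2 * r.2) ≤ ∑ r ∈ s, ENNReal.ofReal (2 * r.2) := by
        have hstep : ∑ r ∈ s', ENNReal.ofReal (2 * r.2) ≤
            ENNReal.ofReal (2 * ρ) + ∑ r ∈ t, ENNReal.ofReal (2 * r.2) := by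
          by_cases hmem : (c, ρ) ∈ t
          · rw [hs'def, Finset.insert_eq_self.2 hmem]
            exact le_add_self
          · rw [hs'def, Finset.sum_insert hmem]
        have hcost : ENNReal.ofReal (2 * ρ) ≤
            ENNReal.ofReal (2 * p.2) + ENNReal.ofReal (2 * q.2) := by
          rw [← ENNReal.ofReal_add (by linarith) (by linarith)]
          exact ENNReal.ofReal_le_ofReal (by linarith)
        have hdecomp : ∑ r ∈ s, ENNReal.ofReal (2 * r.2) =
            ENNReal.ofReal (2 * p.2) + (ENNReal.ofReal (2 * q.2) +
              ∑ r ∈ t, ENNReal.ofReal (2 * r.2)) := by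
          have h1 := (Finset.add_sum_erase s (fun r => ENNReal.ofReal (2 * r.2)) hp).symm
          have h2 := (Finset.add_sum_erase (s.erase p)
            (fun r => ENNReal.ofReal (2 * r.2)) hqt).symm
          rw [htdef, h1, h2]
        calc ∑ r ∈ s', ENNReal.ofReal (2 * r.2)
            ≤ ENNReal.ofReal (2 * ρ) + ∑ r ∈ t, ENNReal.ofReal (2 * r.2) := hstep
        _ ≤ (ENNReal.ofReal (2 * p.2) + ENNReal.ofReal (2 * q.2)) +
              ∑ r ∈ t, ENNReal.ofReal (2 * r.2) := by
            exact add_le_add_left hcost _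
        _ = ∑ r ∈ s, ENNReal.ofReal (2 * r.2) := by rw [hdecomp, add_assoc]
      exact le_trans (ih s' hcard' hcov') hsum
    · push_neg at hex
      have hdisj : ∀ p ∈ s, ∀ q ∈ s, p ≠ q →
          Disjoint (closedBall p.1 p.2) (closedBall q.1 q.2) := by
        intro p hp q hq hpq
        rw [Set.disjoint_iff_inter_eq_empty]
        exact hex p hp q hq hpq
      exact H1content_le_of_cover K s (crux K hK s hdisj hcov)

end Main

/-- If `K ⊆ ℝ²` is compact, then the one-dimensional Hausdorff content of `K`
equals that of its topological boundary. -/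
theorem H1content_eq_H1content_frontier
    (K : Set (EuclideanSpace ℝ (Fin 2))) (hK : IsCompact K) :
    H1content K = H1content (frontier K) := by
  apply le_antisymm
  · rw [H1content]
    apply le_iInf
    intro s
    apply le_iInf
    intro hcov
    exact key_lemma K hK s.card s le_rfl hcov
  · rw [show H1content (frontier K) = ⨅ (s : Finset (EuclideanSpace ℝ (Fin 2) × ℝ))
        (_ : frontier K ⊆ ⋃ p ∈ s, closedBall p.1 p.2),
        ∑ p ∈ s, ENNReal.ofReal (2 * p.2) from rfl]
    rw [H1content]
    apply le_iInf
    intro s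
    apply le_iInf
    intro hcov
    exact iInf_le_of_le s (iInf_le _ (le_trans hK.isClosed.frontier_subset hcov))
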